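/- arXiv:1405.5960 — 6 statements merged into one kernel-verified Lean document; each statement's English description precedes it below -/
import Mathlib

section
/- Let L be the graph Laplacian of a connected graph (symmetric PSD with null space exactly span{1_N}), and let Z* be a solution of the LASS problem min λ·tr(Zᵀ L Z) − tr(Gᵀ Z) s.t. Z 1_K = 1_N, Z ≥ 0. Then any other solution has the form Z* + 1_N pᵀ where p ∈ ℝ^K satisfies pᵀ 1_K = 0, pᵀ(Gᵀ 1_N) = 0, and Z* + 1_N pᵀ ≥ 0. -/
open Matrix

/-- Feasibility for the LASS problem. -/
def LassFeasible {N K : ℕ} (Z : Matrix (Fin N) (Fin K) ℝ) : Prop :=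
  Z *ᵥ (1 : Fin K → ℝ) = (1 : Fin N → ℝ) ∧ ∀ n k, 0 ≤ Z n k

/-- The LASS objective. -/
noncomputable def lassObj {N K : ℕ} (lam : ℝ) (L : Matrix (Fin N) (Fin N) ℝ)
    (G : Matrix (Fin N) (Fin K) ℝ) (Z : Matrix (Fin N) (Fin K) ℝ) : ℝ :=
  lam * (Zᵀ * L * Z).trace - (Gᵀ * Z).trace

private lemma lass_trace_nonneg {N K : ℕ} (L : Matrix (Fin N) (Fin N) ℝ) (hL : L.PosSemidef)
    (D : Matrix (Fin N) (Fin K) ℝ) : 0 ≤ (Dᵀ * L * D).trace := by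
  have hsym : ∀ i j, L i j = L j i := fun i j => by
    have := congrFun (congrFun hL.1 j) i
    simpa [Matrix.conjTranspose_apply] using this
  rw [Matrix.trace]
  apply Finset.sum_nonneg
  intro k _
  have h := hL.dotProduct_mulVec_nonneg (fun n => D n k)
  simp only [Matrix.mul_apply, Matrix.mulVec, dotProduct, Finset.mul_sum, Matrix.diag,
    Matrix.transpose_apply, RCLike.star_def, Pi.star_apply, star_trivial, Finset.sum_mul] at h ⊢
  refine le_trans h (le_of_eq ?_)
  apply Finset.sum_congr rfl; intro x _
  apply Finset.sum_congr rfl; intro y _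
  rw [hsym]; ring

private lemma lass_mul_one_p {N K : ℕ} (L : Matrix (Fin N) (Fin N) ℝ)
    (hL1 : L *ᵥ (1 : Fin N → ℝ) = 0)
    (p : Fin K → ℝ) : L * Matrix.vecMulVec (1 : Fin N → ℝ) p = 0 := by
  ext i j
  have := congrFun hL1 i
  simp [Matrix.mul_apply, Matrix.vecMulVec_apply, Matrix.mulVec, dotProduct] at this ⊢
  simp [← Finset.sum_mul, this]

private lemma lass_trace_G_one_p {N K : ℕ} (G : Matrix (Fin N) (Fin K) ℝ) (p : Fin K → ℝ) :
    (Gᵀ * Matrix.vecMulVec (1 : Fin N → ℝ) p).trace = p ⬝ᵥ (Gᵀ *ᵥ (1 : Fin N → ℝ)) := by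
  simp [Matrix.trace, Matrix.mul_apply, Matrix.vecMulVec_apply, Matrix.mulVec, dotProduct,
    Matrix.diag, Finset.mul_sum, mul_comm]

private lemma lass_mid_feasible {N K : ℕ} (Z W : Matrix (Fin N) (Fin K) ℝ)
    (hZ : LassFeasible Z) (hW : LassFeasible W) :
    LassFeasible ((1/2 : ℝ) • Z + (1/2 : ℝ) • W) := by
  constructor
  · rw [Matrix.add_mulVec, Matrix.smul_mulVec, Matrix.smul_mulVec, hZ.1, hW.1]
    ext n; simp; norm_num
  · intro n k
    have := hZ.2 n k; have := hW.2 n k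
    simp only [Matrix.add_apply, Matrix.smul_apply, smul_eq_mul]
    nlinarith

private lemma lass_obj_mid {N K : ℕ} (L : Matrix (Fin N) (Fin N) ℝ)
    (G : Matrix (Fin N) (Fin K) ℝ) (lam : ℝ) (Z W : Matrix (Fin N) (Fin K) ℝ) :
    lassObj lam L G ((1/2 : ℝ) • Z + (1/2 : ℝ) • W) =
      (1/2) * lassObj lam L G Z + (1/2) * lassObj lam L G W
        - (lam/4) * ((Z - W)ᵀ * L * (Z - W)).trace := by
  simp only [lassObj, Matrix.transpose_add, Matrix.transpose_smul, Matrix.transpose_sub,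
    Matrix.add_mul, Matrix.mul_add, Matrix.sub_mul, Matrix.mul_sub, Matrix.smul_mul,
    Matrix.mul_smul, Matrix.trace_add, Matrix.trace_sub, Matrix.trace_smul, smul_eq_mul]
  ring_nf

theorem lass_solution_structure {N K : ℕ}
    (L : Matrix (Fin N) (Fin N) ℝ) (G : Matrix (Fin N) (Fin K) ℝ) (lam : ℝ)
    (hlam : 0 < lam) (hL : L.PosSemidef) (hL1 : L *ᵥ (1 : Fin N → ℝ) = 0)
    -- connectedness: the Laplacian quadratic form vanishes only on constant columns
    (hconn : ∀ P : Matrix (Fin N) (Fin K) ℝ, (Pᵀ * L * P).trace = 0 →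
      ∃ p : Fin K → ℝ, P = Matrix.vecMulVec (1 : Fin N → ℝ) p)
    (Zstar : Matrix (Fin N) (Fin K) ℝ)
    (hsol : LassFeasible Zstar ∧
      ∀ Z, LassFeasible Z → lassObj lam L G Zstar ≤ lassObj lam L G Z) :
    ∀ Z, (LassFeasible Z ∧
        ∀ Z', LassFeasible Z' → lassObj lam L G Z ≤ lassObj lam L G Z') →
      ∃ p : Fin K → ℝ,
        Z = Zstar + Matrix.vecMulVec (1 : Fin N → ℝ) p ∧
        p ⬝ᵥ (1 : Fin K → ℝ) = 0 ∧
        p ⬝ᵥ (Gᵀ *ᵥ (1 : Fin N → ℝ)) = 0 ∧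
        (∀ n k, 0 ≤ (Zstar + Matrix.vecMulVec (1 : Fin N → ℝ) p) n k) := by
  obtain ⟨hfs, hopt⟩ := hsol
  intro Z ⟨hfZ, hoptZ⟩
  rcases Nat.eq_zero_or_pos N with hN | hN
  · -- N = 0: everything is trivial, take p = 0
    subst hN
    refine ⟨0, ?_, by simp, by simp, ?_⟩
    · ext n k; exact n.elim0
    · intro n k; exact n.elim0
  -- equal objective values
  have heq : lassObj lam L G Z = lassObj lam L G Zstar :=
    le_antisymm (hoptZ Zstar hfs) (hopt Z hfZ)
  -- midpoint argument gives trace of quadratic form of the difference = 0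
  set D : Matrix (Fin N) (Fin K) ℝ := Z - Zstar with hD
  have hqD : (Dᵀ * L * D).trace = 0 := by
    have hmidf := lass_mid_feasible Z Zstar hfZ hfs
    have hge := hopt _ hmidf
    have hexp := lass_obj_mid L G lam Z Zstar
    rw [heq] at hexp
    have h0 : 0 ≤ (Dᵀ * L * D).trace := lass_trace_nonneg L hL D
    nlinarith [h0]
  obtain ⟨p, hp⟩ := hconn D hqD
  have hZeq : Z = Zstar + Matrix.vecMulVec (1 : Fin N → ℝ) p := by
    rw [← hp, hD]; abel
  refine ⟨p, hZeq, ?_, ?_, ?_⟩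
  · -- p ⬝ 1 = 0
    · obtain ⟨n0⟩ := Fin.pos_iff_nonempty.mp hN
      have hrow : D *ᵥ (1 : Fin K → ℝ) = 0 := by
        rw [hD, Matrix.sub_mulVec, hfZ.1, hfs.1, sub_self]
      have := congrFun hrow n0
      rw [hp] at this
      simpa [Matrix.mulVec, Matrix.vecMulVec_apply, dotProduct] using this
  · -- p ⬝ (Gᵀ 1) = 0
    have hLD : L * Matrix.vecMulVec (1 : Fin N → ℝ) p = 0 := lass_mul_one_p L hL1 p
    have hq : (Zᵀ * L * Z).trace = (Zstarᵀ * L * Zstar).trace := by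
      have hLt : Lᵀ = L := hL.1
      rw [hZeq]
      simp only [Matrix.transpose_add, Matrix.add_mul, Matrix.mul_add, Matrix.trace_add]
      have h1 : Zstarᵀ * L * Matrix.vecMulVec (1 : Fin N → ℝ) p = 0 := by
        rw [Matrix.mul_assoc, hLD, Matrix.mul_zero]
      have h2 : (Matrix.vecMulVec (1 : Fin N → ℝ) p)ᵀ * L * Zstar = 0 := by
        have : ((Matrix.vecMulVec (1 : Fin N → ℝ) p)ᵀ * L * Zstar)ᵀ = 0 := by
          simp only [Matrix.transpose_mul, Matrix.transpose_transpose, hLt]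
          rw [hLD, Matrix.mul_zero]
        calc (Matrix.vecMulVec (1 : Fin N → ℝ) p)ᵀ * L * Zstar
            = (((Matrix.vecMulVec (1 : Fin N → ℝ) p)ᵀ * L * Zstar)ᵀ)ᵀ := by
              rw [Matrix.transpose_transpose]
          _ = 0 := by rw [this]; simp
      have h3 : (Matrix.vecMulVec (1 : Fin N → ℝ) p)ᵀ * L *
          Matrix.vecMulVec (1 : Fin N → ℝ) p = 0 := by
        rw [Matrix.mul_assoc, hLD, Matrix.mul_zero]
      rw [h1, h2, h3]
      simp
    have hlin : (Gᵀ * Z).trace = (Gᵀ * Zstar).trace + p ⬝ᵥ (Gᵀ *ᵥ (1 : Fin N → ℝ)) := by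
      rw [hZeq, Matrix.mul_add, Matrix.trace_add, lass_trace_G_one_p]
    have : lassObj lam L G Z - lassObj lam L G Zstar
        = -(p ⬝ᵥ (Gᵀ *ᵥ (1 : Fin N → ℝ))) := by
      simp only [lassObj, hq, hlin]; ring
    rw [heq, sub_self] at this
    linarith
  · intro n k
    rw [← hZeq]
    exact hfZ.2 n k
end

section
/- Let Z be a solution of the LASS problem with connected-graph Laplacian L = D − W (D the diagonal degree matrix of the nonnegative symmetric affinity matrix W with positive row sums). If row n of G is zero (g_n = 0), then the assignment row z_n equals the W-weighted average of the other rows: z_n = (Zᵀ w_n)/(1_Nᵀ w_n), where w_n is row n of W, and this Z satisfies the KKT conditions with μ_n = 0 and π_n = 0. -/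
open Matrix

/-- KKT conditions for the LASS problem. -/
def LassKKT {N K : ℕ} (lam : ℝ) (L : Matrix (Fin N) (Fin N) ℝ)
    (G Z : Matrix (Fin N) (Fin K) ℝ) (pi : Fin N → ℝ)
    (M : Matrix (Fin N) (Fin K) ℝ) : Prop :=
  (2 * lam) • (L * Z) - G - Matrix.vecMulVec pi (1 : Fin K → ℝ) - M = 0 ∧
  LassFeasible Z ∧ (∀ n k, 0 ≤ M n k) ∧ (∀ n k, M n k * Z n k = 0)



lemma poly_nonneg (c q : ℝ) (h : ∀ t : ℝ, 0 < t → t ≤ 1 → 0 ≤ c * t + q * t ^ 2) :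
    0 ≤ c := by
  by_contra hc
  push_neg at hc
  have hq1 : 0 < |q| + 1 := by positivity
  set t : ℝ := min 1 (-c / (2 * (|q| + 1))) with ht
  have ht0 : 0 < t := lt_min one_pos (div_pos (by linarith) (by positivity))
  have ht1 : t ≤ 1 := min_le_left _ _
  have ht2 : t ≤ -c / (2 * (|q| + 1)) := min_le_right _ _
  have h0 := h t ht0 ht1
  have h1 : 0 ≤ c + q * t := by nlinarith
  have hqt : q * t ≤ (|q| + 1) * t :=
    mul_le_mul_of_nonneg_right (by linarith [le_abs_self q]) ht0.le
  have h2 : (|q| + 1) * t ≤ (|q| + 1) * (-c / (2 * (|q| + 1))) :=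
    mul_le_mul_of_nonneg_left ht2 hq1.le
  have h3 : (|q| + 1) * (-c / (2 * (|q| + 1))) = -c / 2 := by field_simp
  linarith

lemma trace_single_mul {N K : ℕ} (m : Fin N) (d : Fin K → ℝ) (A : Matrix (Fin N) (Fin K) ℝ) :
    ((Matrix.vecMulVec (Pi.single m (1:ℝ)) d)ᵀ * A).trace = ∑ k, d k * A m k := by
  simp [Matrix.trace, Matrix.diag, Matrix.mul_apply, Matrix.vecMulVec_apply,
    Pi.single_apply, ite_mul, mul_comm]

lemma obj_expand {N K : ℕ} (lam : ℝ) (L : Matrix (Fin N) (Fin N) ℝ) (hL : Lᵀ = L)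
    (G Z E : Matrix (Fin N) (Fin K) ℝ) (t : ℝ) :
    lassObj lam L G (Z + t • E) = lassObj lam L G Z
      + t * (2 * lam * (Eᵀ * L * Z).trace - (Gᵀ * E).trace)
      + t ^ 2 * (lam * (Eᵀ * L * E).trace) := by
  have hswap : (Zᵀ * L * E).trace = (Eᵀ * L * Z).trace := by
    rw [← Matrix.trace_transpose (Zᵀ * L * E)]
    congr 1
    rw [Matrix.transpose_mul, Matrix.transpose_mul, Matrix.transpose_transpose, hL,
      Matrix.mul_assoc]
  simp only [lassObj, transpose_add, transpose_smul, Matrix.add_mul, Matrix.mul_add,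
    Matrix.smul_mul, Matrix.mul_smul, trace_add, trace_smul, smul_eq_mul]
  rw [hswap]; ring

theorem lass_zero_similarity_row {N K : ℕ}
    (W : Matrix (Fin N) (Fin N) ℝ) (hWsym : W.IsSymm) (hWpos : ∀ n m, 0 ≤ W n m)
    (hWrow : ∀ n, 0 < ∑ m, W n m)
    (L : Matrix (Fin N) (Fin N) ℝ)
    (hLdef : L = Matrix.diagonal (W *ᵥ (1 : Fin N → ℝ)) - W)
    -- connectedness: the Laplacian quadratic form vanishes only on constant columns
    (hconn : ∀ P : Matrix (Fin N) (Fin K) ℝ, (Pᵀ * L * P).trace = 0 →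
      ∃ p : Fin K → ℝ, P = Matrix.vecMulVec (1 : Fin N → ℝ) p)
    (G : Matrix (Fin N) (Fin K) ℝ) (lam : ℝ) (hlam : 0 < lam)
    (Z : Matrix (Fin N) (Fin K) ℝ)
    (hsol : LassFeasible Z ∧
      ∀ Z', LassFeasible Z' → lassObj lam L G Z ≤ lassObj lam L G Z')
    (n : Fin N) (hGn : ∀ k, G n k = 0) :
    (∀ k, Z n k = (∑ m, W n m * Z m k) / (∑ m, W n m)) ∧
    ∃ (pi : Fin N → ℝ) (M : Matrix (Fin N) (Fin K) ℝ),
      LassKKT lam L G Z pi M ∧ (∀ k, M n k = 0) ∧ pi n = 0 := by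
  obtain ⟨⟨hfeas1, hfeas2⟩, hopt⟩ := hsol
  have hrow : ∀ j, ∑ k, Z j k = 1 := by
    intro j
    have := congrFun hfeas1 j
    simpa [Matrix.mulVec, dotProduct] using this
  have hLsym : Lᵀ = L := by
    rw [hLdef, Matrix.transpose_sub, Matrix.diagonal_transpose, hWsym.eq]
  have hLapp : ∀ (m : Fin N) k, (L * Z) m k
      = (∑ j, W m j) * Z m k - ∑ j, W m j * Z j k := by
    intro m k
    rw [hLdef, Matrix.sub_mul]
    simp [Matrix.mul_apply, Matrix.mulVec, dotProduct, Matrix.diagonal_apply,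
      ite_mul, Finset.sum_ite_eq]
  -- row sums of perturbation directions
  have hEfeasrow : ∀ (m : Fin N) (d : Fin K → ℝ), (∑ k, d k) = 0 → ∀ (t : ℝ),
      (Z + t • Matrix.vecMulVec (Pi.single m (1:ℝ)) d) *ᵥ (1 : Fin K → ℝ)
        = (1 : Fin N → ℝ) := by
    intro m d hd t
    funext j
    have h1 := congrFun hfeas1 j
    simp only [Matrix.mulVec, dotProduct, Matrix.add_apply, Matrix.smul_apply,
      Matrix.vecMulVec_apply, Pi.one_apply, mul_one, smul_eq_mul] at h1 ⊢
    rw [Finset.sum_add_distrib, h1]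
    have : ∑ k, t * ((Pi.single m 1 : Fin N → ℝ) j * d k)
        = t * (Pi.single m 1 : Fin N → ℝ) j * (∑ k, d k) := by
      rw [Finset.mul_sum]; apply Finset.sum_congr rfl; intro k _; ring
    rw [this, hd, mul_zero, add_zero]
  -- part 1
  set dn := ∑ j, W n j with hdnd
  have hdn0 : 0 < dn := hWrow n
  have hpart1 : ∀ k, Z n k = (∑ m, W n m * Z m k) / dn := by
    set d : Fin K → ℝ := fun k => (∑ j, W n j * Z j k) / dn - Z n k with hdd
    have hsumd : ∑ k, d k = 0 := by
      simp only [hdd]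
      rw [Finset.sum_sub_distrib, hrow n, ← Finset.sum_div, Finset.sum_comm]
      have : ∑ j, ∑ k, W n j * Z j k = dn := by
        rw [hdnd]; apply Finset.sum_congr rfl; intro j _
        rw [← Finset.mul_sum, hrow j, mul_one]
      rw [this, div_self hdn0.ne']
      ring
    set E := Matrix.vecMulVec (Pi.single n (1:ℝ)) d with hE
    have hfeas' : LassFeasible (Z + (1:ℝ) • E) := by
      refine ⟨hEfeasrow n d hsumd 1, ?_⟩
      intro i k
      simp only [Matrix.add_apply, Matrix.smul_apply, hE, Matrix.vecMulVec_apply,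
        smul_eq_mul, one_mul]
      rcases eq_or_ne i n with rfl | hne
      · simp only [Pi.single_eq_same, one_mul, hdd]
        have : Z i k + ((∑ j, W i j * Z j k) / dn - Z i k) = (∑ j, W i j * Z j k) / dn := by
          ring
        rw [this]
        exact div_nonneg (Finset.sum_nonneg fun j _ => mul_nonneg (hWpos i j) (hfeas2 j k))
          hdn0.le
      · rw [Pi.single_eq_of_ne hne, zero_mul, add_zero]
        exact hfeas2 i k
    have hle := hopt _ hfeas'
    rw [obj_expand lam L hLsym G Z E 1] at hle
    have htr1 : (Eᵀ * L * Z).trace = ∑ k, d k * (L * Z) n k := by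
      rw [Matrix.mul_assoc, hE, trace_single_mul]
    have htr2 : (Gᵀ * E).trace = 0 := by
      rw [← Matrix.trace_transpose, Matrix.transpose_mul, Matrix.transpose_transpose,
        hE, trace_single_mul]
      apply Finset.sum_eq_zero; intro k _; rw [hGn k, mul_zero]
    have htr3 : (Eᵀ * L * E).trace = (dn - W n n) * ∑ k, d k ^ 2 := by
      rw [Matrix.mul_assoc, hE, trace_single_mul]
      have hLE : ∀ k, (L * Matrix.vecMulVec (Pi.single n (1:ℝ)) d) n k = L n n * d k := by
        intro k
        simp [Matrix.mul_apply, Matrix.vecMulVec_apply, Pi.single_apply, mul_ite,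
          Finset.sum_ite_eq]
      have hLnn : L n n = dn - W n n := by
        rw [hLdef]
        simp [Matrix.mulVec, dotProduct, hdnd]
      rw [Finset.mul_sum]
      apply Finset.sum_congr rfl; intro k _
      rw [hLE k, hLnn]; ring
    have hLZd : ∀ k, (L * Z) n k = -dn * d k := by
      intro k
      rw [hLapp n k, hdd]
      have : dn * ((∑ j, W n j * Z j k) / dn) = ∑ j, W n j * Z j k :=
        mul_div_cancel₀ _ hdn0.ne'
      simp only [← hdnd]
      nlinarith [this]
    have hsq : (∑ k, d k ^ 2) = 0 := by
      have h1 : (∑ k, d k * (L * Z) n k) = -dn * ∑ k, d k ^ 2 := by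
        rw [Finset.mul_sum]
        apply Finset.sum_congr rfl; intro k _
        rw [hLZd k]; ring
      rw [htr1, htr2, htr3, h1] at hle
      have hsqn : 0 ≤ ∑ k, d k ^ 2 := Finset.sum_nonneg fun k _ => sq_nonneg _
      have hup : ∑ k, d k ^ 2 ≤ 0 := by
        nlinarith [hle, mul_pos hlam hdn0,
          mul_nonneg (mul_nonneg hlam.le (hWpos n n)) hsqn]
      linarith
    intro k
    have hdk : d k = 0 := by
      have := (Finset.sum_eq_zero_iff_of_nonneg (fun k _ => sq_nonneg (d k))).mp hsq
        k (Finset.mem_univ k)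
      exact pow_eq_zero_iff (two_ne_zero) |>.mp this
    have := hdk
    rw [hdd] at this
    simp only at this
    linarith [this]
  -- the gradient row function
  set S : Fin N → Fin K → ℝ := fun m k => 2 * lam * (L * Z) m k - G m k with hS
  -- key variational inequality
  have hkey : ∀ (m : Fin N) (k0 : Fin K), (∑ k, S m k * Z m k) ≤ S m k0 := by
    intro m k0
    set d : Fin K → ℝ := fun k => (Pi.single k0 1 : Fin K → ℝ) k - Z m k with hdd
    have hsumd : ∑ k, d k = 0 := by
      simp only [hdd]
      rw [Finset.sum_sub_distrib, hrow m]
      simp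
    set E := Matrix.vecMulVec (Pi.single m (1:ℝ)) d with hE
    have hfeas' : ∀ t : ℝ, 0 < t → t ≤ 1 → LassFeasible (Z + t • E) := by
      intro t ht0 ht1
      refine ⟨hEfeasrow m d hsumd t, ?_⟩
      intro i k
      simp only [Matrix.add_apply, Matrix.smul_apply, hE, Matrix.vecMulVec_apply,
        smul_eq_mul]
      rcases eq_or_ne i m with rfl | hne
      · simp only [Pi.single_eq_same, one_mul, hdd]
        have hz := hfeas2 i k
        have : (0:ℝ) ≤ (Pi.single k0 1 : Fin K → ℝ) k := by
          rcases eq_or_ne k k0 with rfl | h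
          · simp
          · rw [Pi.single_eq_of_ne h]
        nlinarith
      · rw [Pi.single_eq_of_ne hne, zero_mul, mul_zero, add_zero]
        exact hfeas2 i k
    have hc : 0 ≤ 2 * lam * (Eᵀ * L * Z).trace - (Gᵀ * E).trace := by
      apply poly_nonneg _ (lam * (Eᵀ * L * E).trace)
      intro t ht0 ht1
      have hle := hopt _ (hfeas' t ht0 ht1)
      rw [obj_expand lam L hLsym G Z E t] at hle
      nlinarith [hle]
    have htr1 : (Eᵀ * L * Z).trace = ∑ k, d k * (L * Z) m k := by
      rw [Matrix.mul_assoc, hE, trace_single_mul]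
    have htr2 : (Gᵀ * E).trace = ∑ k, d k * G m k := by
      rw [← Matrix.trace_transpose, Matrix.transpose_mul, Matrix.transpose_transpose,
        hE, trace_single_mul]
    rw [htr1, htr2] at hc
    have hcc : 2 * lam * (∑ k, d k * (L * Z) m k) - ∑ k, d k * G m k
        = ∑ k, d k * S m k := by
      rw [Finset.mul_sum, ← Finset.sum_sub_distrib]
      apply Finset.sum_congr rfl; intro k _
      rw [hS]; ring
    rw [hcc] at hc
    have hsplit : ∑ k, d k * S m k = S m k0 - ∑ k, S m k * Z m k := by
      simp only [hdd, sub_mul]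
      rw [Finset.sum_sub_distrib]
      congr 1
      · rw [Finset.sum_eq_single k0]
        · simp
        · intro b _ hb; rw [Pi.single_eq_of_ne hb, zero_mul]
        · intro h; exact absurd (Finset.mem_univ k0) h
      · apply Finset.sum_congr rfl; intro k _; ring
    rw [hsplit] at hc
    linarith
  -- L*Z vanishes at row n
  have hLZn : ∀ k, (L * Z) n k = 0 := by
    intro k
    rw [hLapp n k, hpart1 k, ← hdnd, mul_div_cancel₀ _ hdn0.ne', sub_self]
  have hSn : ∀ k, S n k = 0 := by
    intro k; rw [hS]; simp only
    rw [hLZn k, hGn k, mul_zero, sub_zero]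
  refine ⟨hpart1, fun m => ∑ k, S m k * Z m k,
    Matrix.of (fun m k => S m k - ∑ j, S m j * Z m j), ⟨?_, ⟨hfeas1, hfeas2⟩, ?_, ?_⟩, ?_, ?_⟩
  · ext m k
    simp only [Matrix.sub_apply, Matrix.smul_apply, Matrix.vecMulVec_apply, Pi.one_apply,
      Matrix.of_apply, Matrix.zero_apply, smul_eq_mul, hS]
    ring
  · intro m k
    simp only [Matrix.of_apply]
    linarith [hkey m k]
  · intro m k
    simp only [Matrix.of_apply]
    have hsum0 : ∑ j, (S m j - ∑ i, S m i * Z m i) * Z m j = 0 := by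
      simp only [sub_mul]
      rw [Finset.sum_sub_distrib, ← Finset.mul_sum, hrow m, mul_one, sub_self]
    have := (Finset.sum_eq_zero_iff_of_nonneg (fun j _ =>
      mul_nonneg (by linarith [hkey m j] : (0:ℝ) ≤ S m j - ∑ i, S m i * Z m i)
        (hfeas2 m j))).mp hsum0 k (Finset.mem_univ k)
    exact this
  · intro k
    have h0 : ∑ j, S n j * Z n j = 0 :=
      Finset.sum_eq_zero fun j _ => by rw [hSn j, zero_mul]
    simp only [Matrix.of_apply]
    rw [hSn k, h0, sub_self]
  · exact Finset.sum_eq_zero fun j _ => by rw [hSn j, zero_mul]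
end

section
/- For the ADMM iteration for LASS: ν ← (ρ/K)(Y − U)1_K − h with h = −(1/K)G 1_K + (ρ/K)1_N; Z ← (2λL + ρI)^{-1}(ρ(Y − U) + G − ν 1_Kᵀ); Y ← (Z + U)_+; U ← U + Z − Y. After each full iteration, the iterate Z satisfies Z 1_K = 1_N exactly. -/
open Matrix

lemma posSemidef_smul' {n : ℕ} {A : Matrix (Fin n) (Fin n) ℝ} (hA : A.PosSemidef)
    {c : ℝ} (hc : 0 ≤ c) : (c • A).PosSemidef := by
  refine ⟨by rw [Matrix.IsHermitian, Matrix.conjTranspose_smul, hA.1.eq, star_trivial], fun x => ?_⟩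
  have := hA.2 x
  simpa [Finsupp.mul_sum, mul_assoc, mul_left_comm] using smul_nonneg hc this

theorem lass_admm_row_sums {N K : ℕ} (hK : 0 < K)
    (L : Matrix (Fin N) (Fin N) ℝ) (hL : L.PosSemidef)
    (hL1 : L *ᵥ (1 : Fin N → ℝ) = 0)
    (G : Matrix (Fin N) (Fin K) ℝ) (lam rho : ℝ) (hlam : 0 < lam) (hrho : 0 < rho)
    (Y U : Matrix (Fin N) (Fin K) ℝ)
    (h : Fin N → ℝ)
    (hh : h = -((1 : ℝ)/K) • (G *ᵥ (1 : Fin K → ℝ)) + (rho/K) • (1 : Fin N → ℝ))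
    (nu : Fin N → ℝ)
    (hnu : nu = (rho/K) • ((Y - U) *ᵥ (1 : Fin K → ℝ)) - h)
    (Z : Matrix (Fin N) (Fin K) ℝ)
    (hZ : Z = ((2 * lam) • L + rho • (1 : Matrix (Fin N) (Fin N) ℝ))⁻¹ *
      (rho • (Y - U) + G - Matrix.vecMulVec nu (1 : Fin K → ℝ))) :
    Z *ᵥ (1 : Fin K → ℝ) = (1 : Fin N → ℝ) := by
  set M : Matrix (Fin N) (Fin N) ℝ := (2 * lam) • L + rho • (1 : Matrix (Fin N) (Fin N) ℝ)
    with hM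
  have hKR : (K : ℝ) ≠ 0 := Nat.cast_ne_zero.mpr hK.ne'
  -- M is positive definite, hence invertible
  have hMpd : M.PosDef := by
    refine Matrix.PosDef.posSemidef_add (posSemidef_smul' hL (by positivity)) ?_
    rw [← Matrix.diagonal_one, ← Matrix.diagonal_smul]
    exact Matrix.posDef_diagonal_iff.mpr fun _ => by simpa using hrho
  have hdet : IsUnit M.det := hMpd.det_pos.ne'.isUnit
  have hMinv : M⁻¹ * M = 1 := Matrix.nonsing_inv_mul M hdet
  -- M *ᵥ 1 = rho • 1
  have hM1 : M *ᵥ (1 : Fin N → ℝ) = rho • (1 : Fin N → ℝ) := by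
    rw [hM, Matrix.add_mulVec, Matrix.smul_mulVec, Matrix.smul_mulVec, hL1,
      Matrix.one_mulVec]
    simp
  -- the right-hand factor applied to 1 equals rho • 1
  have hA1 : (rho • (Y - U) + G - Matrix.vecMulVec nu (1 : Fin K → ℝ)) *ᵥ (1 : Fin K → ℝ)
      = rho • (1 : Fin N → ℝ) := by
    have hvv : Matrix.vecMulVec nu (1 : Fin K → ℝ) *ᵥ (1 : Fin K → ℝ) = (K : ℝ) • nu := by
      funext i
      simp [Matrix.mulVec, Matrix.vecMulVec_apply, dotProduct, mul_comm]
    rw [Matrix.sub_mulVec, Matrix.add_mulVec, Matrix.smul_mulVec, hvv, hnu, hh]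
    funext i
    simp only [Pi.add_apply, Pi.sub_apply, Pi.smul_apply, Pi.neg_apply, Pi.one_apply,
      smul_eq_mul, smul_sub, smul_add, smul_neg]
    field_simp
    ring
  rw [hZ, ← Matrix.mulVec_mulVec, hA1, ← hM1, Matrix.mulVec_mulVec, hMinv, Matrix.one_mulVec]
end

section
/- Any fixed point of the ADMM iteration for LASS yields a KKT point: if (Z, Y, U, ν) satisfies ν = (ρ/K)(Y−U)1_K − h, Z = (2λL + ρI)^{-1}(ρ(Y−U) + G − ν1_Kᵀ), Y = (Z+U)_+, and U = U + Z − Y (so Z = Y), then Z with multipliers π = −ν and M = −ρU satisfies the KKT conditions: 2λLZ − G − π1_Kᵀ − M = 0, Z1_K = 1_N, Z ≥ 0, M ≥ 0, M ∘ Z = 0. -/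
open Matrix

theorem lass_admm_fixed_point_is_kkt {N K : ℕ} (hK : 0 < K)
    (L : Matrix (Fin N) (Fin N) ℝ) (hL : L.PosSemidef)
    (hL1 : L *ᵥ (1 : Fin N → ℝ) = 0)
    (G : Matrix (Fin N) (Fin K) ℝ) (lam rho : ℝ) (hlam : 0 < lam) (hrho : 0 < rho)
    (Z Y U : Matrix (Fin N) (Fin K) ℝ) (nu : Fin N → ℝ) (h : Fin N → ℝ)
    (hh : h = -((1 : ℝ)/K) • (G *ᵥ (1 : Fin K → ℝ)) + (rho/K) • (1 : Fin N → ℝ))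
    (hnu : nu = (rho/K) • ((Y - U) *ᵥ (1 : Fin K → ℝ)) - h)
    (hZ : Z = ((2 * lam) • L + rho • (1 : Matrix (Fin N) (Fin N) ℝ))⁻¹ *
      (rho • (Y - U) + G - Matrix.vecMulVec nu (1 : Fin K → ℝ)))
    (hYfix : ∀ n k, Y n k = max (Z n k + U n k) 0)
    (hUfix : U = U + Z - Y) :
    ((2 * lam) • (L * Z) - G - Matrix.vecMulVec (-nu) (1 : Fin K → ℝ)
        - (-rho) • U = 0) ∧
    Z *ᵥ (1 : Fin K → ℝ) = (1 : Fin N → ℝ) ∧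
    (∀ n k, 0 ≤ Z n k) ∧
    (∀ n k, 0 ≤ ((-rho) • U) n k) ∧
    (∀ n k, ((-rho) • U) n k * Z n k = 0) := by
  have hKR : (0:ℝ) < (K:ℝ) := by exact_mod_cast hK
  -- Z = Y
  have hZY : Z = Y := by
    have h0 : Z - Y = (U + Z - Y) - U := by abel
    rw [← hUfix, sub_self] at h0
    exact sub_eq_zero.mp h0
  -- key pointwise identity
  have key : ∀ n k, Z n k = max (Z n k + U n k) 0 := by
    intro n k
    have hy := hYfix n k
    rw [← hZY] at hy
    exact hy
  have hZnonneg : ∀ n k, 0 ≤ Z n k := fun n k => (key n k) ▸ le_max_right _ _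
  have hUZ : ∀ n k, U n k ≤ 0 ∧ U n k * Z n k = 0 := by
    intro n k
    rcases le_or_gt (Z n k + U n k) 0 with hc | hc
    · have hZ0 : Z n k = 0 := by rw [key n k, max_eq_right hc]
      refine ⟨by linarith [hZnonneg n k, hZ0], by rw [hZ0, mul_zero]⟩
    · have hU0 : U n k = 0 := by
        have := key n k
        rw [max_eq_left hc.le] at this
        linarith
      exact ⟨hU0.le, by rw [hU0, zero_mul]⟩
  -- positive definiteness of A
  set A := (2 * lam) • L + rho • (1 : Matrix (Fin N) (Fin N) ℝ) with hA_def
  have hherm : ∀ (c : ℝ) (M : Matrix (Fin N) (Fin N) ℝ), M.IsHermitian →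
      (c • M).IsHermitian := by
    intro c M hM
    unfold Matrix.IsHermitian at *
    rw [conjTranspose_smul, star_trivial, hM]
  have hsmul : ((2 * lam) • L).PosSemidef := by
    exact hL.smul (by linarith)
  have hone : ((rho : ℝ) • (1 : Matrix (Fin N) (Fin N) ℝ)).PosDef := by
    exact Matrix.PosDef.one.smul hrho
  have hA : A.PosDef := Matrix.PosDef.posSemidef_add hsmul hone
  have hdet : IsUnit A.det := (Matrix.isUnit_iff_isUnit_det A).mp hA.isUnit
  -- stationarity
  have hAZ : A * Z = rho • (Y - U) + G - Matrix.vecMulVec nu (1 : Fin K → ℝ) := by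
    rw [hZ]; exact Matrix.mul_nonsing_inv_cancel_left _ _ hdet
  have hAZ' : (2 * lam) • (L * Z) + rho • Z
      = rho • (Z - U) + G - Matrix.vecMulVec nu (1 : Fin K → ℝ) := by
    rw [hZY]
    calc (2 * lam) • (L * Y) + rho • Y = A * Y := by
          rw [hA_def, Matrix.add_mul, Matrix.smul_mul, Matrix.smul_mul, Matrix.one_mul]
      _ = _ := by rw [← hZY, hAZ, hZY]
  refine ⟨?_, ?_, hZnonneg, ?_, ?_⟩
  · -- stationarity equation
    ext n k
    have hs : ((2 * lam) • (L * Z) + rho • Z) n k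
        = (rho • (Z - U) + G - Matrix.vecMulVec nu (1 : Fin K → ℝ)) n k := by rw [hAZ']
    simp only [Matrix.add_apply, Matrix.sub_apply, Matrix.smul_apply, Matrix.vecMulVec_apply,
      Pi.one_apply, smul_eq_mul, mul_one] at hs ⊢
    simp only [Matrix.zero_apply, Pi.neg_apply, neg_mul]
    linarith
  · -- row sums
    have hRHS1 : (rho • (Y - U) + G - Matrix.vecMulVec nu (1 : Fin K → ℝ)) *ᵥ
        (1 : Fin K → ℝ) = rho • (1 : Fin N → ℝ) := by
      ext n
      have hvv : (Matrix.vecMulVec nu (1 : Fin K → ℝ) *ᵥ (1 : Fin K → ℝ)) n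
          = (K : ℝ) * nu n := by
        simp [Matrix.mulVec, dotProduct, Matrix.vecMulVec_apply, Finset.sum_const,
          Finset.card_univ]
      rw [Matrix.sub_mulVec, Matrix.add_mulVec, smul_mulVec]
      simp only [Pi.sub_apply, Pi.add_apply, Pi.smul_apply, smul_eq_mul, Pi.one_apply, mul_one,
        hvv]
      rw [hnu, hh]
      simp only [Pi.sub_apply, Pi.add_apply, Pi.smul_apply, Pi.neg_apply, Pi.one_apply,
        smul_eq_mul, mul_one]
      field_simp
      ring
    have hA1 : A *ᵥ (1 : Fin N → ℝ) = rho • (1 : Fin N → ℝ) := by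
      rw [hA_def, Matrix.add_mulVec, smul_mulVec, smul_mulVec, hL1, one_mulVec]
      simp
    have heq : A *ᵥ (Z *ᵥ (1 : Fin K → ℝ)) = A *ᵥ (1 : Fin N → ℝ) := by
      rw [Matrix.mulVec_mulVec, hAZ, hRHS1, hA1]
    exact (Matrix.mulVec_injective_iff_isUnit.mpr hA.isUnit) heq
  · intro n k
    simp only [Matrix.smul_apply, smul_eq_mul, neg_mul]
    nlinarith [(hUZ n k).1]
  · intro n k
    simp only [Matrix.smul_apply, smul_eq_mul, neg_mul, neg_mul_comm]
    rw [mul_assoc, (hUZ n k).2, mul_zero, neg_zero]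
end

section
/- Under the conditions of the SSL label propagation (connected graph, L_u invertible, Z_l ≥ 0 with rows summing to 1), the propagated labels Z_u = −L_u^{-1} L_{ul} Z_l also satisfy Z_u ≥ 0 entrywise (maximum principle for harmonic functions on a graph). -/
open Matrix

lemma lap_form {n : Type*} [Fintype n] [DecidableEq n] (W : Matrix n n ℝ) (a b : n → ℝ) :
    a ⬝ᵥ ((Matrix.diagonal (W *ᵥ (1 : n → ℝ)) - W) *ᵥ b)
      = ∑ i, ∑ j, W i j * a i * (b i - b j) := by
  simp only [dotProduct, mulVec, Matrix.sub_apply, Pi.one_apply, mul_one,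
    Finset.mul_sum, Finset.sum_mul, mul_sub, sub_mul, Finset.sum_sub_distrib]
  congr 1 <;> refine Finset.sum_congr rfl fun i _ => ?_
  · rw [Finset.sum_eq_single i (fun j _ hj => by simp [diagonal_apply_ne _ (Ne.symm hj)]) (by simp)]
    simp only [diagonal_apply_eq, mulVec, dotProduct, Pi.one_apply, mul_one,
      Finset.sum_mul, Finset.mul_sum]
    refine Finset.sum_congr rfl fun j _ => by ring
  · refine Finset.sum_congr rfl fun j _ => by ring

lemma lap_symm_form {n : Type*} [Fintype n] [DecidableEq n] (W : Matrix n n ℝ)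
    (hW : W.IsSymm) (a b : n → ℝ) :
    2 * (a ⬝ᵥ ((Matrix.diagonal (W *ᵥ (1 : n → ℝ)) - W) *ᵥ b))
      = ∑ i, ∑ j, W i j * (a i - a j) * (b i - b j) := by
  have h1 := lap_form W a b
  have h2 : a ⬝ᵥ ((Matrix.diagonal (W *ᵥ (1 : n → ℝ)) - W) *ᵥ b)
      = ∑ i, ∑ j, W i j * a j * (b j - b i) := by
    rw [h1, Finset.sum_comm]
    refine Finset.sum_congr rfl fun i _ => Finset.sum_congr rfl fun j _ => ?_
    rw [← hW.apply i j]
  rw [two_mul]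
  nth_rewrite 1 [h1]
  rw [h2, ← Finset.sum_add_distrib]
  refine Finset.sum_congr rfl fun i _ => ?_
  rw [← Finset.sum_add_distrib]
  refine Finset.sum_congr rfl fun j _ => by ring

lemma scalar_key (a b : ℝ) :
    (max (-a) 0 - max (-b) 0) * (max a 0 - max b 0) ≤ 0 := by
  rcases le_total a b with h | h
  · exact mul_nonpos_of_nonneg_of_nonpos
      (sub_nonneg.2 (max_le_max (neg_le_neg h) le_rfl))
      (sub_nonpos.2 (max_le_max h le_rfl))
  · exact mul_nonpos_of_nonpos_of_nonneg
      (sub_nonpos.2 (max_le_max (neg_le_neg h) le_rfl))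
      (sub_nonneg.2 (max_le_max h le_rfl))


theorem ssl_propagation_nonneg {Nu Nl K : ℕ}
    (W : Matrix (Fin Nu ⊕ Fin Nl) (Fin Nu ⊕ Fin Nl) ℝ)
    (hWsym : W.IsSymm) (hWpos : ∀ i j, 0 ≤ W i j)
    (L : Matrix (Fin Nu ⊕ Fin Nl) (Fin Nu ⊕ Fin Nl) ℝ)
    (hL : L = Matrix.diagonal (W *ᵥ (1 : Fin Nu ⊕ Fin Nl → ℝ)) - W)
    -- connectedness: the Laplacian quadratic form vanishes only on constant vectors
    (hconn : ∀ v : Fin Nu ⊕ Fin Nl → ℝ, v ⬝ᵥ (L *ᵥ v) = 0 → ∃ c : ℝ, v = fun _ => c)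
    (Lu : Matrix (Fin Nu) (Fin Nu) ℝ) (hLu : Lu = L.toBlocks₁₁)
    (Lul : Matrix (Fin Nu) (Fin Nl) ℝ) (hLul : Lul = L.toBlocks₁₂)
    (hLuInv : IsUnit Lu.det)
    (Zl : Matrix (Fin Nl) (Fin K) ℝ)
    (hZlpos : ∀ i k, 0 ≤ Zl i k)
    (hZlsum : Zl *ᵥ (1 : Fin K → ℝ) = (1 : Fin Nl → ℝ))
    (Zu : Matrix (Fin Nu) (Fin K) ℝ)
    (hZu : Zu = -(Lu⁻¹ * Lul * Zl)) :
    ∀ i k, 0 ≤ Zu i k := by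
  intro i k
  rcases Nat.eq_zero_or_pos Nl with hNl | hNl
  · subst hNl
    have hz : Lul * Zl = 0 := by
      ext a b
      simp [Matrix.mul_apply]
    have : Zu = 0 := by rw [hZu, Matrix.mul_assoc, hz, Matrix.mul_zero, neg_zero]
    simp [this]
  -- main case
  -- the matrix equation Lu * Zu + Lul * Zl = 0
  have hLuZu : Lu * Zu + Lul * Zl = 0 := by
    rw [hZu, Matrix.mul_assoc Lu⁻¹, Matrix.mul_neg, Matrix.mul_nonsing_inv_cancel_left _ _ hLuInv,
      neg_add_cancel]
  set x : Fin Nu ⊕ Fin Nl → ℝ := Sum.elim (fun u => Zu u k) (fun l => Zl l k) with hx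
  -- harmonicity on unlabeled vertices
  have hharm : ∀ u : Fin Nu, (L *ᵥ x) (Sum.inl u) = 0 := by
    intro u
    have h0 : (Lu * Zu + Lul * Zl) u k = 0 := by rw [hLuZu]; rfl
    rw [← h0]
    simp only [mulVec, dotProduct, Fintype.sum_sum_type, hx, Sum.elim_inl, Sum.elim_inr,
      Matrix.add_apply, Matrix.mul_apply, hLu, hLul, Matrix.toBlocks₁₁, Matrix.toBlocks₁₂,
      Matrix.of_apply]
  -- the negative part of x
  set v : Fin Nu ⊕ Fin Nl → ℝ := fun j => max (-(x j)) 0 with hv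
  have hvLx : v ⬝ᵥ (L *ᵥ x) = 0 := by
    simp only [dotProduct, Fintype.sum_sum_type]
    rw [Finset.sum_eq_zero fun u _ => by rw [hharm u, mul_zero],
        Finset.sum_eq_zero fun l _ => ?_, add_zero]
    have : v (Sum.inr l) = 0 := by
      simp only [hv, hx, Sum.elim_inr]
      exact max_eq_right (neg_nonpos.2 (hZlpos l k))
    rw [this, zero_mul]
  -- v + x = fun j => max (x j) 0
  have hvx : v + x = fun j => max (x j) 0 := by
    funext j
    simp only [Pi.add_apply, hv]
    rcases le_total (x j) 0 with h | h
    · rw [max_eq_left (neg_nonneg.2 h), max_eq_right h]; ring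
    · rw [max_eq_right (neg_nonpos.2 h), max_eq_left h]; ring
  -- quadratic form of v is nonpositive
  have hle : v ⬝ᵥ (L *ᵥ v) ≤ 0 := by
    have h2 : 2 * (v ⬝ᵥ (L *ᵥ (v + x)))
        = ∑ a, ∑ b, W a b * (v a - v b) * ((v + x) a - (v + x) b) := by
      rw [hL]; exact lap_symm_form W hWsym v (v + x)
    have hterm : ∑ a, ∑ b, W a b * (v a - v b) * ((v + x) a - (v + x) b) ≤ 0 := by
      refine Finset.sum_nonpos fun a _ => Finset.sum_nonpos fun b _ => ?_
      rw [mul_assoc]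
      refine mul_nonpos_of_nonneg_of_nonpos (hWpos a b) ?_
      rw [congrFun hvx a, congrFun hvx b]
      simp only [hv]
      exact scalar_key (x a) (x b)
    have : 2 * (v ⬝ᵥ (L *ᵥ (v + x))) ≤ 0 := h2 ▸ hterm
    have h4 : v ⬝ᵥ (L *ᵥ (v + x)) ≤ 0 := by linarith
    rw [mulVec_add, dotProduct_add, hvLx, add_zero] at h4
    exact h4
  have hge : 0 ≤ v ⬝ᵥ (L *ᵥ v) := by
    have h2 : 2 * (v ⬝ᵥ (L *ᵥ v)) = ∑ a, ∑ b, W a b * (v a - v b) * (v a - v b) := by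
      rw [hL]; exact lap_symm_form W hWsym v v
    have hterm : 0 ≤ ∑ a, ∑ b, W a b * (v a - v b) * (v a - v b) := by
      refine Finset.sum_nonneg fun a _ => Finset.sum_nonneg fun b _ => ?_
      rw [mul_assoc]
      exact mul_nonneg (hWpos a b) (mul_self_nonneg _)
    linarith [h2 ▸ hterm]
  -- v is constant, and zero at a labeled vertex
  obtain ⟨c, hc⟩ := hconn v (le_antisymm hle hge)
  have hc0 : c = 0 := by
    have := congrFun hc (Sum.inr ⟨0, hNl⟩)
    simp only [hv, hx, Sum.elim_inr] at this
    rw [max_eq_right (neg_nonpos.2 (hZlpos _ k))] at this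
    exact this.symm
  have : v (Sum.inl i) = 0 := by rw [hc, hc0]
  simp only [hv, hx, Sum.elim_inl] at this
  have : -(Zu i k) ≤ 0 := by
    by_contra h
    push_neg at h
    rw [max_eq_left h.le] at this
    linarith
  linarith
end

section
/- If g ∈ ℝ^K has maximum entry g_max attained at a unique index k_max, then the Euclidean projection onto the probability simplex of z̄ + γg converges, as γ → ∞, to the vertex e_{k_max} of the simplex, for any fixed z̄ ∈ ℝ^K. -/
open Matrix Filter Topology RealInnerProductSpace

/-- The probability simplex in `EuclideanSpace ℝ (Fin K)`. -/
def probSimplex (K : ℕ) : Set (EuclideanSpace ℝ (Fin K)) :=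
  {z | (∀ k, 0 ≤ z k) ∧ ∑ k, z k = 1}

set_option maxHeartbeats 1000000 in
theorem lass_projection_limit {K : ℕ}
    (g zbar : EuclideanSpace ℝ (Fin K)) (kmax : Fin K)
    (hmax : ∀ k, k ≠ kmax → g k < g kmax)
    (e : EuclideanSpace ℝ (Fin K))
    (he : e = fun k => if k = kmax then (1 : ℝ) else 0)
    (P : ℝ → EuclideanSpace ℝ (Fin K))
    -- P γ is the Euclidean projection of z̄ + γ g onto the simplex
    (hP : ∀ γ : ℝ, P γ ∈ probSimplex K ∧
      ∀ y ∈ probSimplex K, ‖P γ - (zbar + γ • g)‖ ≤ ‖y - (zbar + γ • g)‖) :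
    Tendsto P atTop (𝓝 e) := by
  classical
  have hKne : Nonempty (Fin K) := ⟨kmax⟩
  set δ : ℝ := Finset.univ.inf' Finset.univ_nonempty
      (fun k => if k = kmax then 1 else g kmax - g k) with hδ
  have hδpos : 0 < δ := by
    rw [hδ, Finset.lt_inf'_iff]
    intro k _
    by_cases h : k = kmax
    · simp [h]
    · simp only [if_neg h]
      exact sub_pos.2 (hmax k h)
  have hδle : ∀ k, k ≠ kmax → δ ≤ g kmax - g k := by
    intro k hk
    have h := Finset.inf'_le (fun k => if k = kmax then 1 else g kmax - g k)
      (Finset.mem_univ k)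
    rw [if_neg hk] at h
    exact h
  have hek : e kmax = 1 := by simp [he]
  have heS : e ∈ probSimplex K := by
    simp only [probSimplex, Set.mem_setOf_eq, he]
    constructor
    · intro k; split <;> norm_num
    · simp
  have hene : ‖e‖ ^ 2 = 1 := by
    rw [← real_inner_self_eq_norm_sq]
    simp only [PiLp.inner_apply, he]
    simp [PiLp.inner_apply, RCLike.inner_apply, ite_mul, mul_ite]
  have hen : ‖e‖ = 1 := by
    rw [← Real.sqrt_sq (norm_nonneg e), hene, Real.sqrt_one]
  set C : ℝ := 1 / 2 + 2 * ‖zbar‖ with hC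
  -- facts about P γ
  have hp0 : ∀ γ k, 0 ≤ P γ k := fun γ k => ((hP γ).1).1 k
  have hp1 : ∀ γ, ∑ k, P γ k = 1 := fun γ => ((hP γ).1).2
  have hpk1 : ∀ γ k, P γ k ≤ 1 := by
    intro γ k
    rw [← hp1 γ]
    exact Finset.single_le_sum (fun j _ => hp0 γ j) (Finset.mem_univ k)
  -- key quantitative bound
  have key : ∀ γ : ℝ, 0 < γ → 1 - P γ kmax ≤ C / δ / γ := by
    intro γ hγ
    set p : EuclideanSpace ℝ (Fin K) := P γ with hp
    set x : EuclideanSpace ℝ (Fin K) := zbar + γ • g with hx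
    have hmin : ‖p - x‖ ≤ ‖e - x‖ := (hP γ).2 e heS
    have hsq : ‖p - x‖ ^ 2 ≤ ‖e - x‖ ^ 2 := pow_le_pow_left₀ (norm_nonneg _) hmin 2
    have hA : ‖p‖ ^ 2 - 2 * ⟪p, x⟫ ≤ ‖e‖ ^ 2 - 2 * ⟪e, x⟫ := by
      have h1 := norm_sub_sq_real p x
      have h2 := norm_sub_sq_real e x
      linarith
    have hEx : ⟪e - p, x⟫ ≤ 1 / 2 := by
      rw [inner_sub_left]
      have : (0:ℝ) ≤ ‖p‖ ^ 2 := sq_nonneg _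
      linarith
    have hpn : ‖p‖ ≤ 1 := by
      have h : ‖p‖ ^ 2 ≤ 1 := by
        rw [← real_inner_self_eq_norm_sq]
        simp only [PiLp.inner_apply, RCLike.inner_apply, starRingEnd_apply, star_trivial]
        calc ∑ k, p k * p k ≤ ∑ k, p k :=
              Finset.sum_le_sum fun k _ => by nlinarith [hp0 γ k, hpk1 γ k]
          _ = 1 := hp1 γ
      nlinarith [norm_nonneg p]
    have hz : -(2 * ‖zbar‖) ≤ ⟪e - p, zbar⟫ := by
      have h := abs_real_inner_le_norm (e - p) zbar
      have h2 : ‖e - p‖ ≤ 2 := by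
        have := norm_sub_le e p
        rw [hen] at this; linarith
      have h3 := neg_abs_le ⟪e - p, zbar⟫
      nlinarith [norm_nonneg zbar]
    have hg : ⟪e - p, g⟫ = ∑ k, p k * (g kmax - g k) := by
      rw [inner_sub_left]
      simp only [PiLp.inner_apply, RCLike.inner_apply, starRingEnd_apply, star_trivial]
      have h1 : ∑ k, e k * g k = g kmax := by
        rw [he]
        simp [ite_mul]
      have h2 : ∑ k, p k * (g kmax - g k) = (∑ k, p k) * g kmax - ∑ k, p k * g k := by
        rw [Finset.sum_mul, ← Finset.sum_sub_distrib]
        congr 1; ext k; ring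
      rw [h2, hp1 γ, one_mul, ← h1]
      congr 1 <;> exact Finset.sum_congr rfl fun k _ => mul_comm _ _
    have hge : δ * (1 - p kmax) ≤ ∑ k, p k * (g kmax - g k) := by
      have hsum : ∑ k, (if k = kmax then 0 else δ * p k) ≤ ∑ k, p k * (g kmax - g k) := by
        refine Finset.sum_le_sum fun k _ => ?_
        by_cases h : k = kmax
        · rw [if_pos h, h, sub_self, mul_zero]
        · simp only [if_neg h]
          have h1 := hδle k h
          nlinarith [hp0 γ k]
      have heq : ∑ k, (if k = kmax then 0 else δ * p k) = δ * (1 - p kmax) := by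
        have h : ∀ k, (if k = kmax then (0:ℝ) else δ * p k)
            = δ * p k - (if k = kmax then δ * p k else 0) := fun k => by
          split <;> ring
        simp_rw [h]
        rw [Finset.sum_sub_distrib, ← Finset.mul_sum, hp1 γ,
          Finset.sum_ite_eq' Finset.univ kmax (fun k => δ * p k)]
        simp; ring
      linarith
    have hXsplit : ⟪e - p, x⟫ = ⟪e - p, zbar⟫ + γ * ⟪e - p, g⟫ := by
      rw [hx, inner_add_right, real_inner_smul_right]
    have hmain : γ * (δ * (1 - p kmax)) ≤ C := by
      have h1 : γ * (δ * (1 - p kmax)) ≤ γ * ⟪e - p, g⟫ := by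
        apply mul_le_mul_of_nonneg_left _ hγ.le
        rw [hg]; exact hge
      rw [hC]
      linarith [hXsplit ▸ hEx]
    rw [div_div, le_div_iff₀ (by positivity)]
    linear_combination hmain
  -- limits
  have hlim0 : Tendsto (fun γ : ℝ => C / δ / γ) atTop (𝓝 0) :=
    Tendsto.div_atTop tendsto_const_nhds tendsto_id
  have hfr : Tendsto (fun γ => 1 - P γ kmax) atTop (𝓝 0) := by
    apply tendsto_of_tendsto_of_tendsto_of_le_of_le' tendsto_const_nhds hlim0
    · filter_upwards with γ
      linarith [hpk1 γ kmax]
    · filter_upwards [eventually_gt_atTop (0:ℝ)] with γ hγ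
      exact key γ hγ
  have hcoord : ∀ k, Tendsto (fun γ => P γ k) atTop (𝓝 (e k)) := by
    intro k
    by_cases h : k = kmax
    · subst h
      rw [hek]
      have := hfr.const_sub 1
      simpa using this
    · have hek0 : e k = 0 := by simp [he, h]
      rw [hek0]
      apply tendsto_of_tendsto_of_tendsto_of_le_of_le' tendsto_const_nhds hfr
      · filter_upwards with γ using hp0 γ k
      · filter_upwards with γ
        have hsub : P γ k + P γ kmax ≤ ∑ j, P γ j := by
          have := Finset.sum_le_sum_of_subset_of_nonneg
            (Finset.subset_univ ({k, kmax} : Finset (Fin K)))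
            (fun j _ _ => hp0 γ j)
          rwa [Finset.sum_pair h] at this
        rw [hp1 γ] at hsub
        linarith
  have hpi : Tendsto (fun γ => (fun k => P γ k : Fin K → ℝ)) atTop (𝓝 (fun k => e k)) :=
    tendsto_pi_nhds.2 hcoord
  let L := PiLp.continuousLinearEquiv 2 ℝ (fun _ : Fin K => ℝ)
  have : Tendsto (fun γ => L.symm (L (P γ))) atTop (𝓝 (L.symm (L e))) :=
    (L.symm.continuous.tendsto _).comp hpi
  simpa using this
end
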